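/- Let 0 ≤ i, j, k ≤ n−1 with S_i ≤ S_j ≤ S_k in lexicographic order. Then lcp(i,k) = min(lcp(i,j), lcp(j,k)). -/

import Mathlib

/-- The suffix `S_i = T[i..n)` of the text `T` of length `n`, as a list. -/
def suff {α : Type*} (T : ℕ → α) (n i : ℕ) : List α :=
  (List.range (n - i)).map (fun t => T (i + t))

/-- `S_i` has type B: there is a `k ≥ i` with `T[k] < T[k+1]` and
`T[m] = T[m+1]` for all `i ≤ m < k`. -/
def TypeB {α : Type*} [LinearOrder α] (T : ℕ → α) (n i : ℕ) : Prop :=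
  ∃ k, i ≤ k ∧ k + 1 < n ∧ T k < T (k + 1) ∧ ∀ m, i ≤ m → m < k → T m = T (m + 1)

/-- `S_i` has type A: either there is a `k ≥ i` with `T[k] > T[k+1]` and
`T[m] = T[m+1]` for all `i ≤ m < k`, or all characters from position `i`
to the end are equal (the type propagates from `S_{n-1}`). -/
def TypeA {α : Type*} [LinearOrder α] (T : ℕ → α) (n i : ℕ) : Prop :=
  (∃ k, i ≤ k ∧ k + 1 < n ∧ T (k + 1) < T k ∧ ∀ m, i ≤ m → m < k → T m = T (m + 1))
  ∨ (∀ m, i ≤ m → m + 1 < n → T m = T (m + 1))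

/-- `S_i` is a B*-suffix: `S_i` has type B and `S_{i+1}` has type A. -/
def TypeBStar {α : Type*} [LinearOrder α] (T : ℕ → α) (n i : ℕ) : Prop :=
  TypeB T n i ∧ TypeA T n (i + 1)

/-- `lcp T n i j` is the largest `s ≥ 0` with `i + s ≤ n`, `j + s ≤ n` and
`T[i+t] = T[j+t]` for all `t < s`. -/
noncomputable def lcp {α : Type*} (T : ℕ → α) (n i j : ℕ) : ℕ :=
  sSup {s | i + s ≤ n ∧ j + s ≤ n ∧ ∀ t, t < s → T (i + t) = T (j + t)}

lemma suff_cons {α : Type*} (T : ℕ → α) {n i : ℕ} (h : i < n) :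
    suff T n i = T i :: suff T n (i + 1) := by
  unfold suff
  have h1 : n - i = (n - (i + 1)) + 1 := by omega
  rw [h1, List.range_succ_eq_map]
  simp [List.map_map, Function.comp]
  intro t _
  congr 1; omega

lemma suff_nil {α : Type*} (T : ℕ → α) {n i : ℕ} (h : n ≤ i) :
    suff T n i = [] := by
  unfold suff
  have : n - i = 0 := by omega
  simp [this]

lemma lex_cons_inv {α : Type*} [LinearOrder α] {a b : α} {l1 l2 : List α}
    (h : List.Lex (· < ·) (a :: l1) (b :: l2)) :
    a < b ∨ (a = b ∧ List.Lex (· < ·) l1 l2) := by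
  cases h with
  | cons h' => exact Or.inr ⟨rfl, h'⟩
  | rel h' => exact Or.inl h'

lemma lex_step {α : Type*} [LinearOrder α] (T : ℕ → α) (n : ℕ) :
    ∀ s i j, (∀ t, t < s → T (i + t) = T (j + t)) → i + s < n → j + s ≤ n →
    (suff T n i = suff T n j ∨ List.Lex (· < ·) (suff T n i) (suff T n j)) →
    j + s < n ∧ (T (i + s) ≠ T (j + s) → T (i + s) < T (j + s)) := by
  intro s
  induction s with
  | zero =>
    intro i j _ hi hj hij
    have hi' : i < n := by omega
    rcases Nat.lt_or_ge j n with hjn | hjn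
    · refine ⟨by omega, ?_⟩
      intro hne
      rw [suff_cons T hi', suff_cons T hjn] at hij
      rcases hij with h | h
      · exact absurd (List.head_eq_of_cons_eq h) (by simpa using hne)
      · rcases lex_cons_inv h with h' | ⟨h', _⟩
        · simpa using h'
        · exact absurd h' (by simpa using hne)
    · exfalso
      rw [suff_cons T hi', suff_nil T hjn] at hij
      rcases hij with h | h
      · exact List.cons_ne_nil _ _ h
      · exact List.not_lex_nil h
  | succ s ih =>
    intro i j heq hi hj hij
    have hi' : i < n := by omega
    have hj' : j < n := by omega
    have h0 : T i = T j := by simpa using heq 0 (by omega)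
    rw [suff_cons T hi', suff_cons T hj'] at hij
    have hij' : suff T n (i+1) = suff T n (j+1) ∨
        List.Lex (· < ·) (suff T n (i+1)) (suff T n (j+1)) := by
      rcases hij with h | h
      · exact Or.inl (List.tail_eq_of_cons_eq h)
      · rcases lex_cons_inv h with h' | ⟨_, h''⟩
        · exact absurd h0 (ne_of_lt h')
        · exact Or.inr h''
    have heq' : ∀ t, t < s → T (i + 1 + t) = T (j + 1 + t) := by
      intro t ht
      have := heq (t + 1) (by omega)
      convert this using 2 <;> omega
    have key := ih (i+1) (j+1) heq' (by omega) (by omega) hij'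
    have e1 : i + 1 + s = i + (s+1) := by omega
    have e2 : j + 1 + s = j + (s+1) := by omega
    rw [e1, e2] at key
    exact ⟨by omega, key.2⟩


lemma lcp_bdd {α : Type*} (T : ℕ → α) (n i j : ℕ) :
    BddAbove {s | i + s ≤ n ∧ j + s ≤ n ∧ ∀ t, t < s → T (i + t) = T (j + t)} :=
  ⟨n, fun s hs => le_trans (Nat.le_add_left s i) hs.1⟩

lemma lcp_mem {α : Type*} (T : ℕ → α) (n i j : ℕ) (hi : i ≤ n) (hj : j ≤ n) :
    i + lcp T n i j ≤ n ∧ j + lcp T n i j ≤ n ∧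
      ∀ t, t < lcp T n i j → T (i + t) = T (j + t) := by
  have : (0 : ℕ) ∈ {s | i + s ≤ n ∧ j + s ≤ n ∧ ∀ t, t < s → T (i + t) = T (j + t)} :=
    ⟨by omega, by omega, fun t ht => absurd ht (by omega)⟩
  exact Nat.sSup_mem ⟨0, this⟩ (lcp_bdd T n i j)

lemma le_lcp {α : Type*} (T : ℕ → α) (n i j s : ℕ) (h1 : i + s ≤ n) (h2 : j + s ≤ n)
    (h3 : ∀ t, t < s → T (i + t) = T (j + t)) : s ≤ lcp T n i j :=
  le_csSup (lcp_bdd T n i j) ⟨h1, h2, h3⟩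


/-- If `S_i ≤ S_j ≤ S_k` lexicographically, then
`lcp(i, k) = min (lcp(i, j)) (lcp(j, k))`. -/
theorem stmt_8 {α : Type*} [LinearOrder α] (T : ℕ → α) (n : ℕ) (hn : 1 ≤ n)
    (i j k : ℕ) (hi : i ≤ n - 1) (hj : j ≤ n - 1) (hk : k ≤ n - 1)
    (hij : suff T n i = suff T n j ∨ List.Lex (· < ·) (suff T n i) (suff T n j))
    (hjk : suff T n j = suff T n k ∨ List.Lex (· < ·) (suff T n j) (suff T n k)) :
    lcp T n i k = min (lcp T n i j) (lcp T n j k) := by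
  have hi' : i ≤ n := by omega
  have hj' : j ≤ n := by omega
  have hk' : k ≤ n := by omega
  obtain ⟨h1a, h1b, h1c⟩ := lcp_mem T n i j hi' hj'
  obtain ⟨h2a, h2b, h2c⟩ := lcp_mem T n j k hj' hk'
  obtain ⟨h3a, h3b, h3c⟩ := lcp_mem T n i k hi' hk'
  set l1 := lcp T n i j with hl1
  set l2 := lcp T n j k with hl2
  set l3 := lcp T n i k with hl3
  -- min ≤ l3
  have hge : min l1 l2 ≤ l3 := by
    apply le_lcp
    · omega
    · omega
    · intro t ht
      rw [h1c t (by omega), h2c t (by omega)]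
  -- l3 ≤ min, by contradiction
  have hle : l3 ≤ min l1 l2 := by
    by_contra hcon
    push_neg at hcon
    set m := min l1 l2 with hm
    have hm3 : m + 1 ≤ l3 := by omega
    have him : i + m < n := by omega
    have hkm : k + m < n := by omega
    have hik : T (i + m) = T (k + m) := h3c m (by omega)
    rcases Nat.le_total l1 l2 with hc | hc
    · -- m = l1
      have hml1 : m = l1 := by omega
      -- not in set for l1+1
      have hnot : ¬ (l1 + 1 ≤ lcp T n i j) := by omega
      have hstep1 := lex_step T n m i j (fun t ht => h1c t (by omega)) him (by omega) hij
      have hjm : j + m < n := hstep1.1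
      have hne : T (i + m) ≠ T (j + m) := by
        intro heq
        apply hnot
        apply le_lcp
        · omega
        · omega
        · intro t ht
          rcases Nat.lt_or_ge t l1 with h | h
          · exact h1c t h
          · have : t = m := by omega
            rw [this]; exact heq
      have hlt1 : T (i + m) < T (j + m) := hstep1.2 hne
      have hstep2 := lex_step T n m j k (fun t ht => h2c t (by omega)) hjm (by omega) hjk
      have hle2 : T (j + m) ≤ T (k + m) := by
        rcases eq_or_ne (T (j + m)) (T (k + m)) with h | h
        · exact le_of_eq h
        · exact le_of_lt (hstep2.2 h)
      rw [← hik] at hle2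
      exact absurd (lt_of_lt_of_le hlt1 hle2) (lt_irrefl _)
    · -- m = l2
      have hml2 : m = l2 := by omega
      have hnot : ¬ (l2 + 1 ≤ lcp T n j k) := by omega
      have hstep1 := lex_step T n m i j (fun t ht => h1c t (by omega)) him (by omega) hij
      have hjm : j + m < n := hstep1.1
      have hstep2 := lex_step T n m j k (fun t ht => h2c t (by omega)) hjm (by omega) hjk
      have hne : T (j + m) ≠ T (k + m) := by
        intro heq
        apply hnot
        apply le_lcp
        · omega
        · omega
        · intro t ht
          rcases Nat.lt_or_ge t l2 with h | h
          · exact h2c t h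
          · have : t = m := by omega
            rw [this]; exact heq
      have hlt2 : T (j + m) < T (k + m) := hstep2.2 hne
      have hle1 : T (i + m) ≤ T (j + m) := by
        rcases eq_or_ne (T (i + m)) (T (j + m)) with h | h
        · exact le_of_eq h
        · exact le_of_lt (hstep1.2 h)
      rw [hik] at hle1
      exact absurd (lt_of_le_of_lt hle1 hlt2) (lt_irrefl _)
  omega
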